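/- Let β, c ∈ ℂ, N ∈ ℕ, and define k(t) := Log(1 − i/(t+β)) and w(t) := −it + Log(t+β) using the principal complex logarithm. Define ψ : ℤ × ℝ → ℂ by ψ(n,t) := exp(−(n/2)·k(t) − N·w(t) − c). Then for every n ∈ ℤ and every t ∈ ℝ such that t+β lies off the closed negative real axis and (t+β−i)/(t+β) lies off the closed negative real axis (so that both logarithms are differentiable at t), one has i·∂ₜψ(n,t) = −(n/2)(ψ(n+2,t) − 2ψ(n,t) + ψ(n−2,t)) + N(ψ(n−2,t) − 2ψ(n,t)). -/

import Mathlib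

open Complex

private lemma psi_alg (A E n M : ℂ) (hA : A ≠ 0) (hB : A - Complex.I ≠ 0) :
    Complex.I * (E * (-(n/2) * (Complex.I/(A*(A-Complex.I))) - M*(-Complex.I + 1/A)))
      = -(n/2)*(E * (A/(A-Complex.I)) - 2*E + E*((A-Complex.I)/A))
        + M*(E*((A-Complex.I)/A) - 2*E) := by
  have hI : Complex.I ^ 2 = -1 := Complex.I_sq
  field_simp
  ring_nf
  linear_combination (-2*Complex.I*E*A*M + 2*E*A^2*M) * hI

/-- The exponential entry `ψ(n,t) = exp(−(n/2)·k(t) − N·w(t) − c)` with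
`k(t) = Log(1 − i/(t+β))` and `w(t) = −it + Log(t+β)` satisfies the `Ψ`-part of the
Casoratian condition equations of the nonisospectral semi-discrete NLS, at every time `t`
where both principal logarithms are differentiable. -/
theorem psi_entry_satisfies_condition (β c : ℂ) (N : ℕ)
    (k w : ℝ → ℂ)
    (hk : ∀ t : ℝ, k t = Complex.log (1 - Complex.I / ((t : ℂ) + β)))
    (hw : ∀ t : ℝ, w t = -Complex.I * (t : ℂ) + Complex.log ((t : ℂ) + β))
    (ψ : ℤ → ℝ → ℂ)
    (hψ : ∀ (n : ℤ) (t : ℝ),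
      ψ n t = Complex.exp (-((n : ℂ) / 2) * k t - (N : ℂ) * w t - c)) :
    ∀ (n : ℤ) (t : ℝ),
      ((t : ℂ) + β) ∈ Complex.slitPlane →
      (((t : ℂ) + β - Complex.I) / ((t : ℂ) + β)) ∈ Complex.slitPlane →
      Complex.I * deriv (fun s : ℝ => ψ n s) t
        = -((n : ℂ) / 2) * (ψ (n + 2) t - 2 * ψ n t + ψ (n - 2) t)
          + (N : ℂ) * (ψ (n - 2) t - 2 * ψ n t) := by
  intro n t hA hB
  set A : ℂ := (t : ℂ) + β with hAdef
  have hA0 : A ≠ 0 := Complex.slitPlane_ne_zero hA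
  have hB0 : A - Complex.I ≠ 0 := by
    intro h
    exact Complex.slitPlane_ne_zero hB (by rw [h, zero_div])
  have hu_eq : 1 - Complex.I / A = (A - Complex.I) / A := by field_simp
  -- complex derivative of z ↦ z + β at (t:ℂ)
  have h1 : HasDerivAt (fun z : ℂ => z + β) 1 ((t : ℝ) : ℂ) :=
    (hasDerivAt_id _).add_const β
  -- derivative of k
  have hkd : HasDerivAt (fun s : ℝ => k s) (Complex.I / (A * (A - Complex.I))) t := by
    have h2 : HasDerivAt (fun z : ℂ => (z + β)⁻¹) (-1 / A ^ 2) ((t : ℝ) : ℂ) := by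
      exact h1.inv hA0
    have h3 := (h2.const_mul Complex.I).const_sub 1
    have hmem : (1 - Complex.I * (((t : ℝ) : ℂ) + β)⁻¹) ∈ Complex.slitPlane := by
      rw [show (1 : ℂ) - Complex.I * (((t : ℝ) : ℂ) + β)⁻¹ = (A - Complex.I) / A by
        rw [← hu_eq]; rw [div_eq_mul_inv]]
      exact hB
    have h4 := (Complex.hasDerivAt_log hmem).comp (((t : ℝ) : ℂ)) h3
    have h5 := h4.comp_ofReal
    have h6 : (fun s : ℝ => k s)
        = fun s : ℝ => Complex.log (1 - Complex.I * (((s : ℝ) : ℂ) + β)⁻¹) := by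
      funext s; rw [hk s, div_eq_mul_inv]
    rw [h6]
    refine h5.congr_deriv ?_
    rw [show (1 : ℂ) - Complex.I * (((t : ℝ) : ℂ) + β)⁻¹ = (A - Complex.I) / A by
      rw [← hu_eq]; rw [div_eq_mul_inv]]
    field_simp
  -- derivative of w
  have hwd : HasDerivAt (fun s : ℝ => w s) (-Complex.I + 1 / A) t := by
    have hlog := ((Complex.hasDerivAt_log hA).comp (((t : ℝ) : ℂ)) h1).comp_ofReal
    have hlin : HasDerivAt (fun s : ℝ => -Complex.I * ((s : ℝ) : ℂ)) (-Complex.I) t := by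
      simpa using ((hasDerivAt_id (((t : ℝ) : ℂ))).const_mul (-Complex.I)).comp_ofReal
    have := hlin.add hlog
    have h6 : (fun s : ℝ => w s)
        = fun s : ℝ => -Complex.I * ((s : ℝ) : ℂ) + Complex.log (((s : ℝ) : ℂ) + β) := by
      funext s; rw [hw s]
    rw [h6]
    refine this.congr_deriv ?_
    rw [one_div, mul_one]
  -- derivative of ψ n
  have hfd : HasDerivAt (fun s : ℝ => -((n : ℂ) / 2) * k s - (N : ℂ) * w s - c)
      (-((n : ℂ) / 2) * (Complex.I / (A * (A - Complex.I)))
        - (N : ℂ) * (-Complex.I + 1 / A)) t :=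
    ((hkd.const_mul (-((n : ℂ) / 2))).sub (hwd.const_mul (N : ℂ))).sub_const c
  have hψd := hfd.cexp
  have hderiv : deriv (fun s : ℝ => ψ n s) t
      = Complex.exp (-((n : ℂ) / 2) * k t - (N : ℂ) * w t - c)
        * (-((n : ℂ) / 2) * (Complex.I / (A * (A - Complex.I)))
            - (N : ℂ) * (-Complex.I + 1 / A)) := by
    have : (fun s : ℝ => ψ n s)
        = fun s : ℝ => Complex.exp (-((n : ℂ) / 2) * k s - (N : ℂ) * w s - c) := by
      funext s; exact hψ n s
    rw [this, hψd.deriv]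
  rw [hderiv]
  -- express shifted entries
  set E : ℂ := Complex.exp (-((n : ℂ) / 2) * k t - (N : ℂ) * w t - c) with hE
  have hek : Complex.exp (k t) = (A - Complex.I) / A := by
    rw [hk t, ← hAdef, hu_eq, Complex.exp_log (div_ne_zero hB0 hA0)]
  have hekn : Complex.exp (-k t) = A / (A - Complex.I) := by
    rw [Complex.exp_neg, hek, inv_div]
  have hp2 : ψ (n + 2) t = E * (A / (A - Complex.I)) := by
    rw [hψ (n + 2) t, ← hekn, ← Complex.exp_add]
    congr 1
    push_cast
    ring
  have hm2 : ψ (n - 2) t = E * ((A - Complex.I) / A) := by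
    rw [hψ (n - 2) t, ← hek, ← Complex.exp_add]
    congr 1
    push_cast
    ring
  have hn : ψ n t = E := (hψ n t).trans hE.symm
  rw [hp2, hm2, hn]
  have := psi_alg A E (n : ℂ) (N : ℂ) hA0 hB0
  calc Complex.I * (E * (-((n : ℂ)/2) * (Complex.I / (A * (A - Complex.I)))
          - (N : ℂ) * (-Complex.I + 1 / A)))
      = -((n : ℂ)/2)*(E * (A/(A-Complex.I)) - 2*E + E*((A-Complex.I)/A))
        + (N : ℂ)*(E*((A-Complex.I)/A) - 2*E) := this
    _ = _ := by ring
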